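/- Let ε > 0 and let f ∈ H¹(0,L), F ∈ H³(0,L) with F'(0) = F'(L) = 0 and F − ε²·F'' = f on (0,L). Then ‖F'‖_{L²(0,L)} ≤ ‖f'‖_{L²(0,L)}. -/
import Mathlib


/-- If `F - ε² F'' = f` on `(0,L)` with homogeneous Neumann boundary conditions,
then `‖F'‖_{L²(0,L)} ≤ ‖f'‖_{L²(0,L)}`. -/
theorem stmt_5 (L ε : ℝ) (hL : 0 < L) (hε : 0 < ε) (f F : ℝ → ℝ)
    (hf : ContDiff ℝ 1 f) (hF : ContDiff ℝ 3 F)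
    (hbc0 : deriv F 0 = 0) (hbcL : deriv F L = 0)
    (heq : ∀ x ∈ Set.Ioo 0 L, F x - ε ^ 2 * deriv (deriv F) x = f x) :
    Real.sqrt (∫ x in (0:ℝ)..L, (deriv F x) ^ 2) ≤
      Real.sqrt (∫ x in (0:ℝ)..L, (deriv f x) ^ 2) := by
  set F1 := deriv F with hF1def
  set F2 := deriv F1 with hF2def
  set F3 := deriv F2 with hF3def
  have hF1 : ContDiff ℝ 2 F1 :=
    (contDiff_succ_iff_deriv.mp (show ContDiff ℝ ((2:ℕ∞) + 1) F by exact_mod_cast hF)).2.2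
  have hF2 : ContDiff ℝ 1 F2 :=
    (contDiff_succ_iff_deriv.mp (show ContDiff ℝ ((1:ℕ∞) + 1) F1 by exact_mod_cast hF1)).2.2
  have hF3c : Continuous F3 :=
    ((contDiff_succ_iff_deriv.mp (show ContDiff ℝ ((0:ℕ∞) + 1) F2 by exact_mod_cast hF2)).2.2).continuous
  have hF1c : Continuous F1 := hF1.continuous
  have hF2c : Continuous F2 := hF2.continuous
  have hd1 : ∀ x : ℝ, HasDerivAt F (F1 x) x := fun x =>
    ((hF.differentiable (by norm_num)) x).hasDerivAt
  have hd2 : ∀ x : ℝ, HasDerivAt F1 (F2 x) x := fun x =>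
    ((hF1.differentiable (by norm_num)) x).hasDerivAt
  have hd3 : ∀ x : ℝ, HasDerivAt F2 (F3 x) x := fun x =>
    ((hF2.differentiable (by norm_num)) x).hasDerivAt
  -- derivative of f on the open interval
  have hderiv : ∀ x ∈ Set.Ioo 0 L, deriv f x = F1 x - ε ^ 2 * F3 x := by
    intro x hx
    have hmem : Set.Ioo 0 L ∈ nhds x := isOpen_Ioo.mem_nhds hx
    have heq' : f =ᶠ[nhds x] fun y => F y - ε ^ 2 * F2 y :=
      Filter.eventuallyEq_of_mem hmem (fun y hy => (heq y hy).symm)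
    have hD : HasDerivAt (fun y => F y - ε ^ 2 * F2 y) (F1 x - ε ^ 2 * F3 x) x :=
      (hd1 x).sub ((hd3 x).const_mul _)
    rw [heq'.deriv_eq, hD.deriv]
  -- rewrite the integral of (f')²
  have hint : (∫ x in (0:ℝ)..L, (deriv f x) ^ 2)
      = ∫ x in (0:ℝ)..L, (F1 x - ε ^ 2 * F3 x) ^ 2 := by
    apply intervalIntegral.integral_congr_ae
    have hae : ∀ᵐ x : ℝ, x ≠ L := by
      rw [MeasureTheory.ae_iff]
      simpa using Real.volume_singleton (x := L)
    filter_upwards [hae] with x hx hxI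
    rw [Set.uIoc_of_le hL.le] at hxI
    rw [hderiv x ⟨hxI.1, lt_of_le_of_ne hxI.2 hx⟩]
  -- integrability facts
  have i1 : IntervalIntegrable (fun x => (F1 x) ^ 2) MeasureTheory.volume 0 L :=
    (hF1c.pow 2).intervalIntegrable 0 L
  have i2 : IntervalIntegrable (fun x => (F2 x) ^ 2) MeasureTheory.volume 0 L :=
    (hF2c.pow 2).intervalIntegrable 0 L
  have i3 : IntervalIntegrable (fun x => (F3 x) ^ 2) MeasureTheory.volume 0 L :=
    (hF3c.pow 2).intervalIntegrable 0 L
  have i13 : IntervalIntegrable (fun x => F1 x * F3 x) MeasureTheory.volume 0 L :=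
    (hF1c.mul hF3c).intervalIntegrable 0 L
  -- expand the square
  have hexpand : (∫ x in (0:ℝ)..L, (F1 x - ε ^ 2 * F3 x) ^ 2)
      = (∫ x in (0:ℝ)..L, (F1 x) ^ 2)
        - 2 * ε ^ 2 * (∫ x in (0:ℝ)..L, F1 x * F3 x)
        + ε ^ 4 * (∫ x in (0:ℝ)..L, (F3 x) ^ 2) := by
    have : (∫ x in (0:ℝ)..L, (F1 x - ε ^ 2 * F3 x) ^ 2)
        = ∫ x in (0:ℝ)..L,
            ((F1 x) ^ 2 - 2 * ε ^ 2 * (F1 x * F3 x) + ε ^ 4 * (F3 x) ^ 2) := by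
      apply intervalIntegral.integral_congr
      intro x _; ring
    rw [this, intervalIntegral.integral_add ((i1.sub (i13.const_mul _)))
        (i3.const_mul _), intervalIntegral.integral_sub i1 (i13.const_mul _),
      intervalIntegral.integral_const_mul, intervalIntegral.integral_const_mul]
  -- integration by parts
  have hibp : (∫ x in (0:ℝ)..L, F1 x * F3 x)
      = - ∫ x in (0:ℝ)..L, (F2 x) ^ 2 := by
    have := intervalIntegral.integral_mul_deriv_eq_deriv_mul
      (u := F1) (u' := F2) (v := F2) (v' := F3)
      (fun x _ => hd2 x) (fun x _ => hd3 x)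
      (hF2c.intervalIntegrable 0 L) (hF3c.intervalIntegrable 0 L)
    rw [this, hbc0, hbcL]
    have : (∫ x in (0:ℝ)..L, F2 x * F2 x) = ∫ x in (0:ℝ)..L, (F2 x) ^ 2 := by
      apply intervalIntegral.integral_congr; intro x _; ring
    rw [this]; ring
  -- nonnegativity of square integrals
  have n2 : 0 ≤ ∫ x in (0:ℝ)..L, (F2 x) ^ 2 :=
    intervalIntegral.integral_nonneg hL.le (fun x _ => sq_nonneg _)
  have n3 : 0 ≤ ∫ x in (0:ℝ)..L, (F3 x) ^ 2 :=
    intervalIntegral.integral_nonneg hL.le (fun x _ => sq_nonneg _)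
  apply Real.sqrt_le_sqrt
  rw [hint, hexpand, hibp]
  nlinarith [sq_nonneg ε, sq_nonneg (ε ^ 2), mul_nonneg (sq_nonneg (ε^2)) n3,
    mul_nonneg (sq_nonneg ε) n2]
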